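/- (von Bahr–Esseen inequality) Let U₁,…,Uₙ be independent real-valued random variables with mean zero, and let 1 ≤ κ ≤ 2. Then E[|∑_{i=1}^n U_i|^κ] ≤ 8 ∑_{i=1}^n E[|U_i|^κ]. -/

import Mathlib

open MeasureTheory ProbabilityTheory Finset

namespace VonBahrEsseenAux

lemma measurable_sign : Measurable Real.sign := by
  unfold Real.sign
  exact Measurable.ite (measurableSet_lt measurable_id measurable_const) measurable_const
    (Measurable.ite (measurableSet_lt measurable_const measurable_id) measurable_const
      measurable_const)

lemma abs_sign_le (t : ℝ) : |Real.sign t| ≤ 1 := by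
  rcases Real.sign_apply_eq t with h | h | h <;> rw [h] <;> norm_num

lemma rpow_subadd {x y p : ℝ} (hx : 0 ≤ x) (hy : 0 ≤ y) (hp : 0 ≤ p) (hp1 : p ≤ 1) :
    (x + y) ^ p ≤ x ^ p + y ^ p := by
  lift x to NNReal using hx
  lift y to NNReal using hy
  have h := NNReal.rpow_add_le_add_rpow x y hp hp1
  exact_mod_cast h

lemma sign_mul_rpow_of_nonneg {t α : ℝ} (ht : 0 ≤ t) (hα : 0 < α) :
    Real.sign t * |t| ^ α = t ^ α := by
  rcases ht.lt_or_eq with h | h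
  · rw [Real.sign_of_pos h, abs_of_pos h, one_mul]
  · rw [← h, Real.sign_zero, zero_mul, Real.zero_rpow hα.ne']

lemma sign_mul_rpow_neg (t α : ℝ) :
    Real.sign (-t) * |(-t)| ^ α = -(Real.sign t * |t| ^ α) := by
  rw [Real.sign_neg, abs_neg, neg_mul]

lemma sign_mul_rpow_nonneg {t α : ℝ} (ht : 0 ≤ t) (hα : 0 < α) :
    0 ≤ Real.sign t * |t| ^ α := by
  rw [sign_mul_rpow_of_nonneg ht hα]
  exact Real.rpow_nonneg ht α

lemma sign_mul_rpow_mono {α : ℝ} (hα : 0 < α) {a b : ℝ} (hab : a ≤ b) :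
    Real.sign a * |a| ^ α ≤ Real.sign b * |b| ^ α := by
  rcases le_total 0 a with ha | ha
  · rw [sign_mul_rpow_of_nonneg ha hα, sign_mul_rpow_of_nonneg (ha.trans hab) hα]
    exact Real.rpow_le_rpow ha hab hα.le
  · rcases le_total 0 b with hb | hb
    · have h1 : Real.sign a * |a| ^ α ≤ 0 := by
        have := sign_mul_rpow_nonneg (neg_nonneg.2 ha) hα
        rw [sign_mul_rpow_neg] at this
        linarith
      linarith [sign_mul_rpow_nonneg hb hα]
    · have h1 : Real.sign (-b) * |(-b)| ^ α ≤ Real.sign (-a) * |(-a)| ^ α := by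
        rw [sign_mul_rpow_of_nonneg (neg_nonneg.2 hb) hα,
          sign_mul_rpow_of_nonneg (neg_nonneg.2 ha) hα]
        exact Real.rpow_le_rpow (neg_nonneg.2 hb) (by linarith) hα.le
      rw [sign_mul_rpow_neg, sign_mul_rpow_neg] at h1
      linarith

/-- Hölder-type estimate for the signed power function, one-sided version. -/
lemma sign_mul_rpow_sub_le {α : ℝ} (hα0 : 0 < α) (hα1 : α ≤ 1) (a b : ℝ) :
    Real.sign a * |a| ^ α - Real.sign b * |b| ^ α ≤ 2 * |a - b| ^ α := by
  rcases le_total a b with hab | hab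
  · have h1 := sign_mul_rpow_mono hα0 hab
    have h2 : (0:ℝ) ≤ |a - b| ^ α := Real.rpow_nonneg (abs_nonneg _) _
    linarith
  · have habs : |a - b| = a - b := abs_of_nonneg (by linarith)
    rcases le_total 0 b with hb | hb
    · have ha : 0 ≤ a := hb.trans hab
      rw [sign_mul_rpow_of_nonneg ha hα0, sign_mul_rpow_of_nonneg hb hα0, habs]
      have hsub : a ^ α ≤ (a - b) ^ α + b ^ α := by
        have h := rpow_subadd (x := a - b) (y := b) (by linarith) hb hα0.le hα1
        rwa [sub_add_cancel] at h
      have h2 : (0:ℝ) ≤ (a - b) ^ α := Real.rpow_nonneg (by linarith) _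
      linarith
    · rcases le_total 0 a with ha | ha
      · have h1 : Real.sign b * |b| ^ α = -(Real.sign (-b) * |(-b)| ^ α) := by
          rw [sign_mul_rpow_neg]; ring
        rw [sign_mul_rpow_of_nonneg ha hα0, h1,
          sign_mul_rpow_of_nonneg (neg_nonneg.2 hb) hα0, habs]
        have h2 : a ^ α ≤ (a - b) ^ α := Real.rpow_le_rpow ha (by linarith) hα0.le
        have h3 : (-b) ^ α ≤ (a - b) ^ α :=
          Real.rpow_le_rpow (neg_nonneg.2 hb) (by linarith) hα0.le
        linarith
      · have h1 : Real.sign a * |a| ^ α = -(Real.sign (-a) * |(-a)| ^ α) := by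
          rw [sign_mul_rpow_neg]; ring
        have h2 : Real.sign b * |b| ^ α = -(Real.sign (-b) * |(-b)| ^ α) := by
          rw [sign_mul_rpow_neg]; ring
        rw [h1, h2, habs, sign_mul_rpow_of_nonneg (neg_nonneg.2 ha) hα0,
          sign_mul_rpow_of_nonneg (neg_nonneg.2 hb) hα0]
        have hsub : (-b) ^ α ≤ (a - b) ^ α + (-a) ^ α := by
          have h := rpow_subadd (x := a - b) (y := -a) (by linarith) (neg_nonneg.2 ha)
            hα0.le hα1
          rwa [show a - b + -a = -b by ring] at h
        have h3 : (0:ℝ) ≤ (a - b) ^ α := Real.rpow_nonneg (by linarith) _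
        linarith

/-- Subgradient inequality for the convex function `|·|^κ`, `κ > 1`. -/
lemma subgrad {κ : ℝ} (hκ : 1 < κ) (a b : ℝ) :
    |b| ^ κ + (κ * Real.sign b * |b| ^ (κ - 1)) * (a - b) ≤ |a| ^ κ := by
  have hκ0 : 0 < κ := by linarith
  suffices H : ∀ a b : ℝ, 0 ≤ b →
      |b| ^ κ + (κ * Real.sign b * |b| ^ (κ - 1)) * (a - b) ≤ |a| ^ κ by
    rcases le_total 0 b with hb | hb
    · exact H a b hb
    · have h := H (-a) (-b) (neg_nonneg.2 hb)
      rw [abs_neg, abs_neg, Real.sign_neg] at h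
      nlinarith [h]
  intro a b hb
  rcases hb.lt_or_eq with hb | hb
  · have hb1 : b ^ κ = b ^ (κ - 1) * b := by
      rw [← Real.rpow_add_one hb.ne' (κ - 1)]
      ring_nf
    rw [abs_of_pos hb, Real.sign_of_pos hb]
    rcases le_total 0 a with ha | ha
    · rw [abs_of_nonneg ha]
      have hbern := one_add_mul_self_le_rpow_one_add
        (s := a / b - 1) (by have h0 : 0 ≤ a / b := div_nonneg ha hb.le; linarith) hκ.le
      rw [show 1 + (a / b - 1) = a / b by ring] at hbern
      have hbκ : 0 < b ^ κ := Real.rpow_pos_of_pos hb κ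
      have h := mul_le_mul_of_nonneg_right hbern hbκ.le
      rw [Real.div_rpow ha hb.le, div_mul_cancel₀ _ hbκ.ne'] at h
      have hkey : (1 + κ * (a / b - 1)) * b ^ κ
          = b ^ κ + (κ * 1 * b ^ (κ - 1)) * (a - b) := by
        rw [hb1]; field_simp
      linarith [hkey ▸ h]
    · have h0 : (0:ℝ) ≤ |a| ^ κ := Real.rpow_nonneg (abs_nonneg a) κ
      have hp : (0:ℝ) ≤ b ^ (κ - 1) := Real.rpow_nonneg hb.le _
      have heq : b ^ κ + (κ * 1 * b ^ (κ - 1)) * (a - b)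
          = -(b ^ (κ - 1) * ((κ - 1) * b - κ * a)) := by
        rw [hb1]; ring
      have hnn : (0:ℝ) ≤ (κ - 1) * b - κ * a := by nlinarith
      nlinarith [mul_nonneg hp hnn]
  · rw [← hb, abs_zero, Real.sign_zero, Real.zero_rpow hκ0.ne']
    simp only [mul_zero, zero_mul, zero_add, mul_comm]
    have h0 : (0:ℝ) ≤ |a| ^ κ := Real.rpow_nonneg (abs_nonneg a) κ
    nlinarith [h0]

/-- Key pointwise inequality. -/
lemma pointwise {κ : ℝ} (hκ1 : 1 < κ) (hκ2 : κ ≤ 2) (x y : ℝ) :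
    |x + y| ^ κ ≤ |x| ^ κ + (κ * Real.sign x * |x| ^ (κ - 1)) * y + 4 * |y| ^ κ := by
  have hκ0 : 0 < κ := by linarith
  have hα0 : 0 < κ - 1 := by linarith
  have hα1 : κ - 1 ≤ 1 := by linarith
  rcases eq_or_ne y 0 with rfl | hy
  · simp [Real.zero_rpow hκ0.ne']
  have h1 := subgrad hκ1 x (x + y)
  rw [show x - (x + y) = -y by ring, mul_neg] at h1
  have hyabs : |y| ≠ 0 := abs_ne_zero.2 hy
  have hmul : |y| ^ (κ - 1) * |y| = |y| ^ κ := by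
    rw [← Real.rpow_add_one hyabs (κ - 1)]
    ring_nf
  have h2 := sign_mul_rpow_sub_le hα0 hα1 (x + y) x
  have h3 := sign_mul_rpow_sub_le hα0 hα1 x (x + y)
  rw [show x + y - x = y by ring] at h2
  rw [show x - (x + y) = -y by ring, abs_neg] at h3
  have hdabs : |Real.sign (x + y) * |x + y| ^ (κ - 1) - Real.sign x * |x| ^ (κ - 1)|
      ≤ 2 * |y| ^ (κ - 1) := abs_le.2 ⟨by linarith, by linarith⟩
  have t1 : (Real.sign (x + y) * |x + y| ^ (κ - 1) - Real.sign x * |x| ^ (κ - 1)) * y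
      ≤ 2 * |y| ^ κ := by
    calc (Real.sign (x + y) * |x + y| ^ (κ - 1) - Real.sign x * |x| ^ (κ - 1)) * y
        ≤ |(Real.sign (x + y) * |x + y| ^ (κ - 1) - Real.sign x * |x| ^ (κ - 1)) * y| :=
          le_abs_self _
      _ = |Real.sign (x + y) * |x + y| ^ (κ - 1) - Real.sign x * |x| ^ (κ - 1)| * |y| :=
          abs_mul _ _
      _ ≤ 2 * |y| ^ (κ - 1) * |y| :=
          mul_le_mul_of_nonneg_right hdabs (abs_nonneg y)
      _ = 2 * |y| ^ κ := by rw [mul_assoc, hmul]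
  have t1κ := mul_le_mul_of_nonneg_left t1 hκ0.le
  have hynn : (0:ℝ) ≤ |y| ^ κ := Real.rpow_nonneg (abs_nonneg y) κ
  nlinarith [t1κ, mul_nonneg (show (0:ℝ) ≤ 2 - κ by linarith) hynn, h1]

variable {Ω : Type*} [MeasureSpace Ω] [IsProbabilityMeasure (ℙ : Measure Ω)]

lemma meas_abs_rpow {κ : ℝ} (hκ0 : 0 ≤ κ) {Z : Ω → ℝ} (hZ : Measurable Z) :
    Measurable (fun ω => |Z ω| ^ κ) :=
  (Real.continuous_rpow_const hκ0).measurable.comp hZ.abs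

lemma crude_bound {κ : ℝ} (hκ0 : 0 < κ) (hκ2 : κ ≤ 2) (x y : ℝ) :
    |x + y| ^ κ ≤ 4 * (|x| ^ κ + |y| ^ κ) := by
  set M := max |x| |y| with hM
  have hMnn : 0 ≤ M := le_trans (abs_nonneg x) (le_max_left _ _)
  have h1 : |x + y| ^ κ ≤ (2 * M) ^ κ := by
    apply Real.rpow_le_rpow (abs_nonneg _) _ hκ0.le
    calc |x + y| ≤ |x| + |y| := abs_add_le _ _
      _ ≤ M + M := add_le_add (le_max_left _ _) (le_max_right _ _)
      _ = 2 * M := by ring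
  have h2 : (2 * M) ^ κ = (2:ℝ) ^ κ * M ^ κ := Real.mul_rpow (by norm_num) hMnn
  have h3 : (2:ℝ) ^ κ ≤ 4 := by
    calc (2:ℝ) ^ κ ≤ (2:ℝ) ^ (2:ℝ) := Real.rpow_le_rpow_of_exponent_le one_le_two hκ2
      _ = 4 := by
        rw [show (2:ℝ) = ((2:ℕ):ℝ) from by norm_num, Real.rpow_natCast]
        norm_num
  have h4 : M ^ κ ≤ |x| ^ κ + |y| ^ κ := by
    rcases le_total |x| |y| with h | h
    · rw [hM, max_eq_right h]
      have := Real.rpow_nonneg (abs_nonneg x) κ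
      linarith
    · rw [hM, max_eq_left h]
      have := Real.rpow_nonneg (abs_nonneg y) κ
      linarith
  have hMκ : (0:ℝ) ≤ M ^ κ := Real.rpow_nonneg hMnn κ
  nlinarith [mul_nonneg (show (0:ℝ) ≤ 4 - (2:ℝ) ^ κ by linarith) hMκ]

lemma abs_phi_le {κ : ℝ} (hκ1 : 1 < κ) (hκ2 : κ ≤ 2) (t : ℝ) :
    |κ * Real.sign t * |t| ^ (κ - 1)| ≤ 2 + 2 * |t| ^ κ := by
  have hκ0 : 0 < κ := by linarith
  have hrnn : (0:ℝ) ≤ |t| ^ (κ - 1) := Real.rpow_nonneg (abs_nonneg t) _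
  have htnn : (0:ℝ) ≤ |t| ^ κ := Real.rpow_nonneg (abs_nonneg t) κ
  have hb : |t| ^ (κ - 1) ≤ 1 + |t| ^ κ := by
    rcases le_total |t| 1 with h | h
    · have := Real.rpow_le_one (abs_nonneg t) h (by linarith : (0:ℝ) ≤ κ - 1)
      linarith
    · have := Real.rpow_le_rpow_of_exponent_le h (show κ - 1 ≤ κ by linarith)
      linarith
  calc |κ * Real.sign t * |t| ^ (κ - 1)|
      = |κ| * |Real.sign t| * |(|t| ^ (κ - 1))| := by rw [abs_mul, abs_mul]
    _ = κ * |Real.sign t| * |t| ^ (κ - 1) := by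
        rw [abs_of_pos hκ0, abs_of_nonneg hrnn]
    _ ≤ κ * 1 * |t| ^ (κ - 1) := by
        apply mul_le_mul_of_nonneg_right _ hrnn
        exact mul_le_mul_of_nonneg_left (abs_sign_le t) hκ0.le
    _ = κ * |t| ^ (κ - 1) := by ring
    _ ≤ 2 * (1 + |t| ^ κ) := by nlinarith
    _ = 2 + 2 * |t| ^ κ := by ring

/-- The main expectation step: one new independent centered summand costs at most
`4 E|Y|^κ`. -/
lemma step {κ : ℝ} (hκ1 : 1 < κ) (hκ2 : κ ≤ 2) {X Y : Ω → ℝ}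
    (hX : Measurable X) (hY : Measurable Y) (hind : IndepFun X Y ℙ)
    (hYint : Integrable Y ℙ) (hYcent : ∫ ω, Y ω ∂ℙ = 0)
    (hXκ : Integrable (fun ω => |X ω| ^ κ) ℙ) (hYκ : Integrable (fun ω => |Y ω| ^ κ) ℙ) :
    Integrable (fun ω => |X ω + Y ω| ^ κ) ℙ ∧
      ∫ ω, |X ω + Y ω| ^ κ ∂ℙ ≤ (∫ ω, |X ω| ^ κ ∂ℙ) + 4 * ∫ ω, |Y ω| ^ κ ∂ℙ := by
  have hκ0 : 0 < κ := by linarith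
  set ψ : ℝ → ℝ := fun t => κ * Real.sign t * |t| ^ (κ - 1) with hψ
  have hψmeas : Measurable ψ :=
    (measurable_const.mul measurable_sign).mul
      ((Real.continuous_rpow_const (by linarith : (0:ℝ) ≤ κ - 1)).measurable.comp
        measurable_abs)
  -- integrability of |X+Y|^κ
  have hSmeas : Measurable (fun ω => |X ω + Y ω| ^ κ) := meas_abs_rpow hκ0.le (hX.add hY)
  have hSint : Integrable (fun ω => |X ω + Y ω| ^ κ) ℙ := by
    refine Integrable.mono ((hXκ.add hYκ).const_mul 4) hSmeas.aestronglyMeasurable ?_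
    filter_upwards with ω
    simp only [Pi.add_apply, Real.norm_eq_abs]
    have h1 : (0:ℝ) ≤ |X ω + Y ω| ^ κ := Real.rpow_nonneg (abs_nonneg _) κ
    have h2 : (0:ℝ) ≤ |X ω| ^ κ := Real.rpow_nonneg (abs_nonneg _) κ
    have h3 : (0:ℝ) ≤ |Y ω| ^ κ := Real.rpow_nonneg (abs_nonneg _) κ
    rw [abs_of_nonneg h1, abs_of_nonneg (by linarith : (0:ℝ) ≤ 4 * (|X ω| ^ κ + |Y ω| ^ κ))]
    exact crude_bound hκ0 hκ2 (X ω) (Y ω)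
  -- integrability of ψ ∘ X
  have hψXint : Integrable (fun ω => ψ (X ω)) ℙ := by
    refine Integrable.mono ((integrable_const (2:ℝ)).add (hXκ.const_mul 2))
      (hψmeas.comp hX).aestronglyMeasurable ?_
    filter_upwards with ω
    simp only [Pi.add_apply, Real.norm_eq_abs]
    have h3 : (0:ℝ) ≤ |X ω| ^ κ := Real.rpow_nonneg (abs_nonneg _) κ
    rw [abs_of_nonneg (by linarith : (0:ℝ) ≤ 2 + 2 * |X ω| ^ κ)]
    exact abs_phi_le hκ1 hκ2 (X ω)
  -- independence of ψ ∘ X and Y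
  have hind2 : IndepFun (ψ ∘ X) Y ℙ := by
    have := hind.comp hψmeas measurable_id
    simpa using this
  have hprodint : Integrable (fun ω => ψ (X ω) * Y ω) ℙ :=
    hind2.integrable_mul hψXint hYint
  have hzero : ∫ ω, ψ (X ω) * Y ω ∂ℙ = 0 := by
    have h := hind2.integral_mul_eq_mul_integral hψXint.aestronglyMeasurable hYint.aestronglyMeasurable
    calc ∫ ω, ψ (X ω) * Y ω ∂ℙ = ∫ ω, ((ψ ∘ X) * Y) ω ∂ℙ := rfl
      _ = (∫ ω, (ψ ∘ X) ω ∂ℙ) * ∫ ω, Y ω ∂ℙ := h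
      _ = 0 := by rw [hYcent, mul_zero]
  refine ⟨hSint, ?_⟩
  have hpt : ∀ ω, |X ω + Y ω| ^ κ ≤ |X ω| ^ κ + ψ (X ω) * Y ω + 4 * |Y ω| ^ κ :=
    fun ω => pointwise hκ1 hκ2 (X ω) (Y ω)
  have hRHSint : Integrable
      (fun ω => |X ω| ^ κ + ψ (X ω) * Y ω + 4 * |Y ω| ^ κ) ℙ :=
    (hXκ.add hprodint).add (hYκ.const_mul 4)
  calc ∫ ω, |X ω + Y ω| ^ κ ∂ℙ
      ≤ ∫ ω, (|X ω| ^ κ + ψ (X ω) * Y ω + 4 * |Y ω| ^ κ) ∂ℙ :=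
        integral_mono hSint hRHSint hpt
    _ = (∫ ω, |X ω| ^ κ ∂ℙ) + (∫ ω, ψ (X ω) * Y ω ∂ℙ) + ∫ ω, 4 * |Y ω| ^ κ ∂ℙ := by
        have e1 : ∫ ω, (|X ω| ^ κ + ψ (X ω) * Y ω + 4 * |Y ω| ^ κ) ∂ℙ
            = (∫ ω, (|X ω| ^ κ + ψ (X ω) * Y ω) ∂ℙ) + ∫ ω, 4 * |Y ω| ^ κ ∂ℙ :=
          integral_add (hXκ.add hprodint) (hYκ.const_mul 4)
        have e2 : ∫ ω, (|X ω| ^ κ + ψ (X ω) * Y ω) ∂ℙ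
            = (∫ ω, |X ω| ^ κ ∂ℙ) + ∫ ω, ψ (X ω) * Y ω ∂ℙ :=
          integral_add hXκ hprodint
        rw [e1, e2]
    _ = (∫ ω, |X ω| ^ κ ∂ℙ) + 4 * ∫ ω, |Y ω| ^ κ ∂ℙ := by
        rw [hzero, integral_const_mul]
        ring

lemma sum_le {κ : ℝ} (hκ1 : 1 < κ) (hκ2 : κ ≤ 2) {n : ℕ} {U : Fin n → Ω → ℝ}
    (hmeas : ∀ i, Measurable (U i))
    (hindep : iIndepFun U ℙ)
    (hint : ∀ i, Integrable (U i) ℙ)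
    (hcent : ∀ i, ∫ ω, U i ω ∂ℙ = 0)
    (hmom : ∀ i, Integrable (fun ω => |U i ω| ^ κ) ℙ)
    (s : Finset (Fin n)) :
    Integrable (fun ω => |∑ i ∈ s, U i ω| ^ κ) ℙ ∧
      ∫ ω, |∑ i ∈ s, U i ω| ^ κ ∂ℙ ≤ 4 * ∑ i ∈ s, ∫ ω, |U i ω| ^ κ ∂ℙ := by
  classical
  have hκ0 : 0 < κ := by linarith
  induction s using Finset.induction_on with
  | empty =>
    simp only [sum_empty, abs_zero, Real.zero_rpow hκ0.ne']
    exact ⟨integrable_const 0, by simp⟩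
  | insert a s ha ih =>
    have hXmeas : Measurable (fun ω => ∑ i ∈ s, U i ω) := by
      apply Finset.measurable_sum
      exact fun i _ => hmeas i
    have hindXY : IndepFun (fun ω => ∑ i ∈ s, U i ω) (U a) ℙ := by
      have h := hindep.indepFun_finsetSum_of_notMem hmeas ha
      have hfun : (∑ j ∈ s, U j) = fun ω => ∑ i ∈ s, U i ω := by
        funext ω; simp [Finset.sum_apply]
      rwa [hfun] at h
    have hstep := step hκ1 hκ2 hXmeas (hmeas a) hindXY (hint a) (hcent a) ih.1 (hmom a)
    have hcomm : (fun ω => |∑ i ∈ insert a s, U i ω| ^ κ)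
        = fun ω => |(∑ i ∈ s, U i ω) + U a ω| ^ κ := by
      funext ω
      rw [Finset.sum_insert ha, add_comm]
    constructor
    · rw [hcomm]; exact hstep.1
    · have hkey : ∫ ω, |∑ i ∈ insert a s, U i ω| ^ κ ∂ℙ
          = ∫ ω, |(∑ i ∈ s, U i ω) + U a ω| ^ κ ∂ℙ := by rw [hcomm]
      rw [hkey, Finset.sum_insert ha]
      have h2 := ih.2
      have h3 := hstep.2
      have h4 : (0:ℝ) ≤ ∫ ω, |U a ω| ^ κ ∂ℙ :=
        integral_nonneg fun ω => Real.rpow_nonneg (abs_nonneg _) κ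
      linarith

end VonBahrEsseenAux

/-- von Bahr–Esseen inequality: for independent centered real random variables
`U₁,…,Uₙ` and `1 ≤ κ ≤ 2`, `E[|∑ᵢ Uᵢ|^κ] ≤ 8 ∑ᵢ E[|Uᵢ|^κ]`. -/
theorem von_bahr_esseen {Ω : Type*} [MeasureSpace Ω]
    [IsProbabilityMeasure (ℙ : Measure Ω)] (n : ℕ) (U : Fin n → Ω → ℝ)
    (hmeas : ∀ i, Measurable (U i))
    (hindep : iIndepFun U ℙ)
    (hint : ∀ i, Integrable (U i) ℙ)
    (hcent : ∀ i, ∫ ω, U i ω ∂ℙ = 0)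
    (κ : ℝ) (hκ1 : 1 ≤ κ) (hκ2 : κ ≤ 2)
    (hmom : ∀ i, Integrable (fun ω => |U i ω| ^ κ) ℙ) :
    ∫ ω, |∑ i, U i ω| ^ κ ∂ℙ ≤ 8 * ∑ i, ∫ ω, |U i ω| ^ κ ∂ℙ := by
  rcases eq_or_lt_of_le hκ1 with heq | hlt
  · -- κ = 1 : triangle inequality
    simp only [← heq, Real.rpow_one]
    have h1 : ∫ ω, |∑ i, U i ω| ∂ℙ ≤ ∑ i, ∫ ω, |U i ω| ∂ℙ := by
      calc ∫ ω, |∑ i, U i ω| ∂ℙ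
          ≤ ∫ ω, ∑ i, |U i ω| ∂ℙ := by
            apply integral_mono
              ((integrable_finset_sum univ fun i _ => hint i).abs)
              (integrable_finset_sum univ fun i _ => (hint i).abs)
            exact fun ω => Finset.abs_sum_le_sum_abs _ _
        _ = ∑ i, ∫ ω, |U i ω| ∂ℙ := integral_finset_sum univ fun i _ => (hint i).abs
    have h2 : (0:ℝ) ≤ ∑ i, ∫ ω, |U i ω| ∂ℙ :=
      Finset.sum_nonneg fun i _ => integral_nonneg fun ω => abs_nonneg _
    linarith
  · have h := (VonBahrEsseenAux.sum_le hlt hκ2 hmeas hindep hint hcent hmom univ).2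
    have h2 : (0:ℝ) ≤ ∑ i, ∫ ω, |U i ω| ^ κ ∂ℙ :=
      Finset.sum_nonneg fun i _ => integral_nonneg fun ω =>
        Real.rpow_nonneg (abs_nonneg _) κ
    linarith
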